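/- EoW brane screened by matter-brane states: in the chord-space model with 0<q<1, r ∈ ℝ, an integer k ≥ 1, nonzero complex α₁,…,α_k with |α_{i+1}|·|r|^i < |α₁| for 1 ≤ i ≤ k−1, and μ ∈ ℂ with |μ|·|r|^{k−1} < |α₁|, define for each m ∈ ℕ the function U_m on binary strings by U_m = Σ_{n=0}^{∞} ((μ·r^{k−1}/α₁)ⁿ/(q;q)_n) · V_m^{(qⁿα_k,…,qⁿα₁)} (the series converges absolutely at every string). Then, coordinatewise, H̃_{R,0} U_m = [m]_q·U_{m−1} + α₁·r·q^m·U_m + U_{m+1}, where H̃_{R,0} = a_{R,0} + a†_{R,0} + μW. Hence the EoW brane is completely screened by the dressed matter chords: H̃_{R,0} acts on the family (U_m) as if the brane tension were α₁·r. -/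

import Mathlib

namespace DSSYK

/-- Binary strings (chord words); the letter `0` is `false`, the letter `1` is `true`. -/
abbrev Str : Type := List Bool

/-- The chord space: finitely supported complex functions on binary strings. -/
abbrev Sp : Type := Str →₀ ℂ

/-- Crossing weights: `Q 0 0 = q`, `Q 1 1 = q_m`, mixed crossings give `r`. -/
def Qmat (q qm r : ℝ) : Bool → Bool → ℂ
  | false, false => (q : ℂ)
  | true,  true  => (qm : ℂ)
  | _,     _     => (r : ℂ)

/-- Right creation `a†_{R,i}`: append the letter `i` on the right. -/
noncomputable def creR (i : Bool) : Sp →ₗ[ℂ] Sp :=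
  Finsupp.lift Sp ℂ Str fun w => Finsupp.single (w ++ [i]) 1

/-- Value of the right annihilation operator on a basis string: delete one letter
equal to `i`, weighted by the crossing factors with all letters to its right. -/
noncomputable def annVecR (Q : Bool → Bool → ℂ) (i : Bool) : Str → Sp
  | [] => 0
  | x :: t =>
      (if x = i then ((t.map (Q i)).prod) • Finsupp.single t (1 : ℂ) else 0)
        + Finsupp.mapDomain (List.cons x) (annVecR Q i t)

/-- Right annihilation `a_{R,i}`. -/
noncomputable def annR (Q : Bool → Bool → ℂ) (i : Bool) : Sp →ₗ[ℂ] Sp :=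
  Finsupp.lift Sp ℂ Str (annVecR Q i)

/-- Left creation `a†_{L,i}`: prepend the letter `i`. -/
noncomputable def creL (i : Bool) : Sp →ₗ[ℂ] Sp :=
  Finsupp.lift Sp ℂ Str fun w => Finsupp.single (i :: w) 1

/-- Value of the left annihilation operator on a basis string: delete one letter
equal to `i`, weighted by the crossing factors with all letters to its left. -/
noncomputable def annVecL (Q : Bool → Bool → ℂ) (i : Bool) : Str → Sp
  | [] => 0
  | x :: t =>
      (if x = i then Finsupp.single t (1 : ℂ) else 0)
        + Q i x • Finsupp.mapDomain (List.cons x) (annVecL Q i t)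

/-- Left annihilation `a_{L,i}`. -/
noncomputable def annL (Q : Bool → Bool → ℂ) (i : Bool) : Sp →ₗ[ℂ] Sp :=
  Finsupp.lift Sp ℂ Str (annVecL Q i)

/-- Diagonal weight operator `δ_w ↦ c₀^{N₀(w)} · c₁^{N₁(w)} · δ_w`, where `N₀, N₁`
count the `0`'s and `1`'s in `w`. -/
noncomputable def Wgen (c₀ c₁ : ℂ) : Sp →ₗ[ℂ] Sp :=
  Finsupp.lift Sp ℂ Str fun w =>
    Finsupp.single w (c₀ ^ (w.count false) * c₁ ^ (w.count true))

/-- The chord-counting weight operator `W δ_w = q^{N₀(w)} r^{N₁(w)} δ_w`. -/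
noncomputable def Wop (q r : ℝ) : Sp →ₗ[ℂ] Sp := Wgen (q : ℂ) (r : ℂ)

/-- Right boundary operators `H_{R,i} = a_{R,i} + a†_{R,i}`. -/
noncomputable def HR (Q : Bool → Bool → ℂ) (i : Bool) : Sp →ₗ[ℂ] Sp := annR Q i + creR i

/-- Left boundary operators `H_{L,i} = a_{L,i} + a†_{L,i}`. -/
noncomputable def HL (Q : Bool → Bool → ℂ) (i : Bool) : Sp →ₗ[ℂ] Sp := annL Q i + creL i

/-- The vacuum `ω = δ_{[]}` (the empty string). -/
noncomputable def vac : Sp := Finsupp.single [] 1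

/-- `ε v = v([])`, the coefficient of the empty string. -/
def eps (v : Sp) : ℂ := v []

end DSSYK

namespace DSSYK

/-- The q-integer `[n]_q = (1 − qⁿ)/(1 − q)` (as a complex number). -/
noncomputable def qIntC (q : ℝ) (n : ℕ) : ℂ := (1 - (q : ℂ) ^ n) / (1 - (q : ℂ))

/-- The q-factorial `[n]!_q = Π_{j=1}^{n} [j]_q` (as a complex number). -/
noncomputable def qFactC (q : ℝ) (n : ℕ) : ℂ := ∏ j ∈ Finset.range n, qIntC q (j + 1)

/-- The q-Pochhammer symbol `(q;q)_n = Π_{j=0}^{n−1}(1 − q^{j+1})` (as a complex number). -/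
noncomputable def qPochQC (q : ℝ) (n : ℕ) : ℂ := ∏ j ∈ Finset.range n, (1 - (q : ℂ) ^ (j + 1))

/-- The infinite q-Pochhammer symbol `(x;q)_∞ = Π_{j=0}^{∞}(1 − x qʲ)`. -/
noncomputable def qPochInfC (q : ℝ) (x : ℂ) : ℂ := ∏' j : ℕ, (1 - x * (q : ℂ) ^ j)

end DSSYK

namespace DSSYK

/-- Coordinatewise (transpose) extension of an operator `T` on the chord space to
arbitrary coefficient functions on binary strings:
`(T f)(u) = Σ_w T_{u,w} f(w)`, where `T_{u,w}` is the coefficient of `δ_u` in `T δ_w`. -/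
noncomputable def coordAct (T : Sp →ₗ[ℂ] Sp) (f : Str → ℂ) : Str → ℂ :=
  fun u => ∑' w : Str, (T (Finsupp.single w 1)) u * f w

/-- The string `0^{n_k} 1 0^{n_{k−1}} 1 ⋯ 0^{n_1} 1 0^m` (recursion in `k`). -/
def braneString (ns : ℕ → ℕ) (m : ℕ) : ℕ → Str
  | 0 => List.replicate m false
  | k + 1 => List.replicate (ns (k + 1)) false ++ true :: braneString ns m k

/-- The coefficient of the `k`-matter brane state on the string with zero-block
lengths `n_k, …, n_1` (and final block `m`):
`(Π_{i=1}^{k} α_i^{n_i}/[n_i]!_q) · Π_{i=1}^{k−1} ((α_{i+1} rᶦ q^{n_1+⋯+n_i}/α₁; q)_∞)⁻¹`. -/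
noncomputable def braneCoeff (q r : ℝ) (α : ℕ → ℂ) (k : ℕ) (ns : ℕ → ℕ) : ℂ :=
  (∏ i ∈ Finset.Icc 1 k, α i ^ ns i / qFactC q (ns i)) *
    ∏ i ∈ Finset.Icc 1 (k - 1),
      (qPochInfC q
        (α (i + 1) * (r : ℂ) ^ i * (q : ℂ) ^ (∑ j ∈ Finset.Icc 1 i, ns j) / α 1))⁻¹

open Classical in
/-- The `k`-matter brane state `V_m^{(α_k,…,α₁)}`, as a coefficient function on binary
strings: supported on strings `0^{n_k} 1 0^{n_{k−1}} 1 ⋯ 0^{n_1} 1 0^m`, where it takes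
the value `braneCoeff`. -/
noncomputable def braneState (q r : ℝ) (α : ℕ → ℂ) (k m : ℕ) (w : Str) : ℂ :=
  if h : ∃ ns : ℕ → ℕ, w = braneString ns m k then braneCoeff q r α k h.choose else 0

end DSSYK

open Finset
namespace DSSYK

lemma mapDomain_cons_nil (x : Bool) (v : Sp) :
    (Finsupp.mapDomain (List.cons x) v) [] = 0 := by
  apply Finsupp.mapDomain_notin_range
  rintro ⟨a, ha⟩
  exact List.cons_ne_nil x a ha

lemma mapDomain_cons_cons (x y : Bool) (v : Sp) (u' : Str) :
    (Finsupp.mapDomain (List.cons x) v) (y :: u') = if y = x then v u' else 0 := by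
  by_cases h : y = x
  · subst h; rw [if_pos rfl, Finsupp.mapDomain_apply List.cons_injective v u']
  · rw [if_neg h, Finsupp.mapDomain_notin_range]
    rintro ⟨a, ha⟩
    exact h (List.head_eq_of_cons_eq ha.symm)

lemma annVecR_apply (Q : Bool → Bool → ℂ) (i : Bool) :
    ∀ (w u : Str), (annVecR Q i w) u =
      ∑ j ∈ Finset.range (u.length + 1),
        if u.insertIdx j i = w then ((u.drop j).map (Q i)).prod else 0
  | [], u => by
      rw [annVecR]
      symm
      rw [Finsupp.coe_zero, Pi.zero_apply]
      refine Finset.sum_eq_zero fun j hj => ?_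
      rw [if_neg]
      intro h
      have h2 := congrArg List.length h
      rw [List.length_insertIdx_of_le_length (Nat.lt_succ_iff.mp (Finset.mem_range.mp hj))] at h2
      simp at h2
  | x :: t, u => by
      rw [annVecR, Finsupp.add_apply]
      cases u with
      | nil =>
        rw [mapDomain_cons_nil, add_zero]
        rw [List.length_nil, zero_add, Finset.sum_range_one, List.insertIdx_zero,
          List.drop_nil, List.map_nil, List.prod_nil]
        by_cases hxi : x = i
        · subst hxi
          by_cases ht : t = []
          · subst ht; simp [Finsupp.single_apply]
          · simp [ht, Finsupp.single_apply, fun h : [x] = x :: t => ht (List.tail_eq_of_cons_eq h).symm]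
        · rw [if_neg hxi, if_neg (fun h : [i] = x :: t => hxi (List.head_eq_of_cons_eq h).symm)]
          simp
      | cons y u' =>
        rw [List.length_cons, Finset.sum_range_succ']
        have h1 : (Finsupp.mapDomain (List.cons x) (annVecR Q i t)) (y::u')
            = ∑ j ∈ range (u'.length+1),
                if (y::u').insertIdx (j+1) i = x :: t
                then (((y::u').drop (j+1)).map (Q i)).prod else 0 := by
          rw [mapDomain_cons_cons]
          by_cases hyx : y = x
          · subst hyx
            rw [if_pos rfl, annVecR_apply Q i t u']
            refine Finset.sum_congr rfl fun j hj => ?_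
            rw [List.insertIdx_succ_cons, List.drop_succ_cons]
            congr 1
            simp only [List.cons.injEq, true_and, eq_iff_iff]
          · rw [if_neg hyx]
            symm; refine Finset.sum_eq_zero fun j hj => ?_
            rw [List.insertIdx_succ_cons, if_neg]
            intro h; exact hyx (List.head_eq_of_cons_eq h)
        have h2 : ((if x = i then ((t.map (Q i)).prod) • Finsupp.single t (1:ℂ) else 0) : Sp) (y::u')
            = if (y::u').insertIdx 0 i = x :: t
              then (((y::u').drop 0).map (Q i)).prod else 0 := by
          rw [List.insertIdx_zero, List.drop_zero]
          by_cases hxi : x = i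
          · subst hxi
            by_cases ht : t = y :: u'
            · subst ht; simp [Finsupp.single_apply]
            · rw [if_pos rfl, Finsupp.smul_apply, Finsupp.single_apply, if_neg ht,
                if_neg (fun h : x :: y :: u' = x :: t => ht (List.tail_eq_of_cons_eq h).symm)]
              simp
          · rw [if_neg hxi, if_neg (fun h : i :: y :: u' = x :: t => hxi (List.head_eq_of_cons_eq h).symm)]
            simp
        rw [h1, h2]
        exact add_comm _ _

end DSSYK

open Finset
namespace DSSYK

lemma eq_dropLast_concat {l : List Bool} (h : l.getLast? = some false) :
    l = l.dropLast ++ [false] := by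
  rcases l.eq_nil_or_concat with rfl | ⟨t, a, rfl⟩
  · simp at h
  · rw [List.concat_eq_append, List.getLast?_concat] at h
    simp only [Option.some.injEq] at h
    simp [h, List.dropLast_concat, List.concat_eq_append]

lemma annR_single (Q : Bool → Bool → ℂ) (i : Bool) (w : Str) :
    annR Q i (Finsupp.single w 1) = annVecR Q i w := by
  rw [annR, Finsupp.lift_apply, Finsupp.sum_single_index] <;> simp

lemma creR_single (i : Bool) (w : Str) :
    creR i (Finsupp.single w 1) = Finsupp.single (w ++ [i]) 1 := by
  rw [creR, Finsupp.lift_apply, Finsupp.sum_single_index] <;> simp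

lemma Wop_single (q r : ℝ) (w : Str) :
    Wop q r (Finsupp.single w 1)
      = Finsupp.single w ((q:ℂ) ^ (w.count false) * (r:ℂ) ^ (w.count true)) := by
  rw [Wop, Wgen, Finsupp.lift_apply, Finsupp.sum_single_index] <;> simp

/-- The annihilation part of the coordinate action. -/
noncomputable def AS (q qm r : ℝ) (f : Str → ℂ) (u : Str) : ℂ :=
  ∑ j ∈ Finset.range (u.length + 1),
    ((u.drop j).map (Qmat q qm r false)).prod * f (u.insertIdx j false)

lemma coordAct_H (q qm r : ℝ) (μ : ℂ) (f : Str → ℂ) (u : Str) :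
    coordAct (annR (Qmat q qm r) false + creR false + μ • Wop q r) f u
      = AS q qm r f u
        + (if u.getLast? = some false then f u.dropLast else 0)
        + μ * (((q:ℂ) ^ (u.count false) * (r:ℂ) ^ (u.count true)) * f u) := by
  set Q := Qmat q qm r with hQ
  have hg : ∀ w : Str,
      ((annR Q false + creR false + μ • Wop q r) (Finsupp.single w 1)) u * f w
      = ((annVecR Q false w) u * f w
        + (Finsupp.single (w ++ [false]) (1:ℂ)) u * f w)
           + μ * ((Finsupp.single w ((q:ℂ)^(w.count false) * (r:ℂ)^(w.count true)) : Sp) u * f w) := by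
    intro w
    rw [LinearMap.add_apply, LinearMap.add_apply, LinearMap.smul_apply, annR_single, creR_single,
      Wop_single, Finsupp.add_apply, Finsupp.add_apply, Finsupp.smul_apply, smul_eq_mul]
    ring
  have hAoff : ∀ w ∉ (Finset.range (u.length+1)).image (fun j => u.insertIdx j false),
      (annVecR Q false w) u = 0 := by
    intro w hw
    rw [annVecR_apply]
    exact Finset.sum_eq_zero fun j hj => if_neg fun h => hw (Finset.mem_image.mpr ⟨j, hj, h⟩)
  have sA : Summable (fun w => (annVecR Q false w) u * f w) :=
    summable_of_ne_finset_zero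
      (s := (Finset.range (u.length+1)).image (fun j => u.insertIdx j false))
      (fun w hw => by rw [hAoff w hw, zero_mul])
  have sB : Summable (fun w => (Finsupp.single (w ++ [false]) (1:ℂ)) u * f w) := by
    refine summable_of_ne_finset_zero (s := {u.dropLast}) (fun w hw => ?_)
    rw [Finsupp.single_apply, if_neg, zero_mul]
    intro h
    exact (Finset.notMem_singleton.mp hw) (by rw [← h, List.dropLast_concat])
  have sC : Summable (fun w => μ * ((Finsupp.single w
      ((q:ℂ)^(w.count false) * (r:ℂ)^(w.count true)) : Sp) u * f w)) := by
    refine Summable.mul_left μ (summable_of_ne_finset_zero (s := {u}) (fun w hw => ?_))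
    rw [Finsupp.single_apply, if_neg (Finset.notMem_singleton.mp hw), zero_mul]
  rw [coordAct, tsum_congr hg, Summable.tsum_add (sA.add sB) sC, Summable.tsum_add sA sB]
  congr 1
  · congr 1
    · -- annihilation part
      rw [tsum_eq_sum (s := (Finset.range (u.length+1)).image (fun j => u.insertIdx j false))
        (fun w hw => by rw [hAoff w hw, zero_mul])]
      have : ∀ w ∈ (Finset.range (u.length+1)).image (fun j => u.insertIdx j false),
          (annVecR Q false w) u * f w
          = ∑ j ∈ Finset.range (u.length + 1),
              if u.insertIdx j false = w then ((u.drop j).map (Q false)).prod * f w else 0 := by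
        intro w _
        rw [annVecR_apply, Finset.sum_mul]
        refine Finset.sum_congr rfl fun j _ => ?_
        rw [ite_mul, zero_mul]
      rw [Finset.sum_congr rfl this, Finset.sum_comm]
      refine Finset.sum_congr rfl fun j hj => ?_
      rw [Finset.sum_ite_eq, if_pos (Finset.mem_image.mpr ⟨j, hj, rfl⟩)]
    · -- creation part
      by_cases hl : u.getLast? = some false
      · rw [if_pos hl]
        rw [tsum_eq_single u.dropLast ?_]
        · rw [Finsupp.single_apply, if_pos (eq_dropLast_concat hl).symm, one_mul]
        · intro w hw
          rw [Finsupp.single_apply, if_neg, zero_mul]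
          intro h
          exact hw (by rw [← h, List.dropLast_concat])
      · rw [if_neg hl]
        have : ∀ w : Str, (Finsupp.single (w ++ [false]) (1:ℂ)) u * f w = 0 := by
          intro w
          rw [Finsupp.single_apply, if_neg, zero_mul]
          intro h
          exact hl (by rw [← h, List.getLast?_concat])
        rw [tsum_congr this, tsum_zero]
  · -- weight part
    rw [tsum_mul_left]
    congr 1
    rw [tsum_eq_single u ?_]
    · rw [Finsupp.single_apply, if_pos rfl]
    · intro w hw
      rw [Finsupp.single_apply, if_neg hw, zero_mul]

end DSSYK

open Finset
namespace DSSYK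

lemma braneString_succ_m (ns : ℕ → ℕ) (m : ℕ) :
    ∀ k, braneString ns (m+1) k = braneString ns m k ++ [false]
  | 0 => by rw [braneString, braneString, List.replicate_succ']
  | k+1 => by
      rw [braneString, braneString, braneString_succ_m ns m k]
      simp

lemma braneString_count_true (ns : ℕ → ℕ) (m : ℕ) :
    ∀ k, (braneString ns m k).count true = k
  | 0 => by simp [braneString, List.count_replicate]
  | k+1 => by
      rw [braneString, List.count_append, List.count_cons]
      simp [List.count_replicate, braneString_count_true ns m k]

lemma braneString_count_false (ns : ℕ → ℕ) (m : ℕ) :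
    ∀ k, (braneString ns m k).count false = (∑ i ∈ Icc 1 k, ns i) + m
  | 0 => by simp [braneString, List.count_replicate]
  | k+1 => by
      rw [braneString, List.count_append, List.count_cons,
        braneString_count_false ns m k, Finset.sum_Icc_succ_top (Nat.le_add_left 1 k)]
      simp [List.count_replicate]
      ring

lemma repl_true_inj : ∀ (a b : ℕ) (s t : Str),
    List.replicate a false ++ true :: s = List.replicate b false ++ true :: t →
    a = b ∧ s = t := by
  intro a
  induction a with
  | zero =>
      intro b s t h
      cases b with
      | zero => simpa using h
      | succ b => simp [List.replicate_succ] at h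
  | succ a ih =>
      intro b s t h
      cases b with
      | zero => simp [List.replicate_succ] at h
      | succ b =>
          simp only [List.replicate_succ, List.cons_append, List.cons.injEq, true_and] at h
          obtain ⟨h1, h2⟩ := ih b s t h
          exact ⟨by omega, h2⟩

lemma braneString_inj : ∀ (k : ℕ) (ns1 ns2 : ℕ → ℕ) (m1 m2 : ℕ),
    braneString ns1 m1 k = braneString ns2 m2 k →
    m1 = m2 ∧ ∀ i ∈ Icc 1 k, ns1 i = ns2 i := by
  intro k
  induction k with
  | zero =>
      intro ns1 ns2 m1 m2 h
      rw [braneString, braneString] at h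
      have := congrArg List.length h
      simp at this
      exact ⟨this, by simp⟩
  | succ k ih =>
      intro ns1 ns2 m1 m2 h
      rw [braneString, braneString] at h
      obtain ⟨h1, h2⟩ := repl_true_inj _ _ _ _ h
      obtain ⟨hm, hns⟩ := ih ns1 ns2 m1 m2 h2
      refine ⟨hm, fun i hi => ?_⟩
      rcases Finset.mem_Icc.mp hi with ⟨hi1, hi2⟩
      rcases Nat.lt_or_ge i (k+1) with hlt | hge
      · exact hns i (Finset.mem_Icc.mpr ⟨hi1, by omega⟩)
      · have : i = k + 1 := by omega
        subst this; exact h1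

lemma braneString_congr (ns1 ns2 : ℕ → ℕ) (m : ℕ) :
    ∀ k, (∀ i ∈ Icc 1 k, ns1 i = ns2 i) →
    braneString ns1 m k = braneString ns2 m k
  | 0 => fun _ => rfl
  | k+1 => fun h => by
      have hsub : ∀ i ∈ Icc 1 k, ns1 i = ns2 i := by
        intro i hi
        rcases Finset.mem_Icc.mp hi with ⟨a, b⟩
        exact h i (Finset.mem_Icc.mpr ⟨a, by omega⟩)
      rw [braneString, braneString, braneString_congr ns1 ns2 m k hsub,
        h (k+1) (Finset.mem_Icc.mpr ⟨by omega, le_refl _⟩)]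

lemma split_first_true : ∀ (u : Str), true ∈ u →
    ∃ a v, u = List.replicate a false ++ true :: v := by
  intro u
  induction u with
  | nil => intro h; simp at h
  | cons x t ih =>
      intro h
      cases x with
      | true => exact ⟨0, t, rfl⟩
      | false =>
          have : true ∈ t := by simpa using h
          obtain ⟨a, v, hv⟩ := ih this
          exact ⟨a+1, v, by rw [List.replicate_succ, List.cons_append, hv]⟩

lemma exists_decomp : ∀ (k : ℕ) (u : Str), u.count true = k →
    ∃ ns m, u = braneString ns m k := by
  intro k
  induction k with
  | zero =>
      intro u h
      refine ⟨fun _ => 0, u.length, ?_⟩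
      rw [braneString]
      apply List.eq_replicate_length.mpr
      intro b hb
      cases b
      · rfl
      · exact absurd hb (List.count_eq_zero.mp h)
  | succ k ih =>
      intro u h
      have ht : true ∈ u := by
        by_contra hc
        rw [List.count_eq_zero.mpr hc] at h
        omega
      obtain ⟨a, v, rfl⟩ := split_first_true u ht
      have hv : v.count true = k := by
        rw [List.count_append, List.count_cons] at h
        simp [List.count_replicate] at h
        omega
      obtain ⟨ns, m, hns⟩ := ih v hv
      refine ⟨Function.update ns (k+1) a, m, ?_⟩
      rw [braneString, Function.update_self,
        ← braneString_congr ns (Function.update ns (k+1) a) m k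
          (fun i hi => ?_), ← hns]
      rw [Function.update_of_ne]
      rcases Finset.mem_Icc.mp hi with ⟨_, h2⟩
      omega

lemma braneString_getLast_succ (ns : ℕ → ℕ) (m k : ℕ) :
    (braneString ns (m+1) k).getLast? = some false := by
  rw [braneString_succ_m, List.getLast?_concat]

lemma braneString_dropLast (ns : ℕ → ℕ) (m k : ℕ) :
    (braneString ns (m+1) k).dropLast = braneString ns m k := by
  rw [braneString_succ_m, List.dropLast_concat]

lemma braneString_concat_true (ns : ℕ → ℕ) :
    ∀ k, 1 ≤ k → ∃ s, braneString ns 0 k = s ++ [true] := by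
  intro k
  induction k with
  | zero => omega
  | succ k ih =>
      intro _
      rcases Nat.eq_zero_or_pos k with rfl | hk
      · exact ⟨List.replicate (ns 1) false, by rw [braneString, braneString]; simp⟩
      · obtain ⟨s, hs⟩ := ih hk
        refine ⟨List.replicate (ns (k+1)) false ++ true :: s, ?_⟩
        rw [braneString, hs]
        simp

lemma braneString_getLast_zero (ns : ℕ → ℕ) (k : ℕ) (hk : 1 ≤ k) :
    (braneString ns 0 k).getLast? = some true := by
  obtain ⟨s, hs⟩ := braneString_concat_true ns k hk
  rw [hs, List.getLast?_concat]

end DSSYK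

open Finset
namespace DSSYK

lemma insertIdx_replicate_append (s : Str) :
    ∀ (n j : ℕ), j ≤ n →
      (List.replicate n false ++ s).insertIdx j false = List.replicate (n+1) false ++ s := by
  intro n j
  induction j generalizing n with
  | zero =>
      intro _
      rw [List.insertIdx_zero, List.replicate_succ, List.cons_append]
  | succ j ih =>
      intro hj
      cases n with
      | zero => omega
      | succ n =>
          rw [List.replicate_succ, List.cons_append, List.insertIdx_succ_cons,
            ih n (by omega)]
          simp [List.replicate_succ]

lemma insertIdx_replicate_append_right (v : Str) :
    ∀ (n j : ℕ),
      (List.replicate n false ++ true :: v).insertIdx (n+1+j) false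
        = List.replicate n false ++ true :: (v.insertIdx j false) := by
  intro n
  induction n with
  | zero =>
      intro j
      simp only [List.replicate, List.nil_append]
      rw [show 0+1+j = j+1 by omega, List.insertIdx_succ_cons]
  | succ n ih =>
      intro j
      rw [List.replicate_succ, List.cons_append, List.cons_append,
        show n+1+1+j = (n+1+j)+1 by omega, List.insertIdx_succ_cons, ih j]

lemma drop_replicate_append (s : Str) :
    ∀ (n j : ℕ), j ≤ n →
      (List.replicate n false ++ s).drop j = List.replicate (n-j) false ++ s := by
  intro n j
  induction j generalizing n with
  | zero => intro _; rfl
  | succ j ih =>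
      intro hj
      cases n with
      | zero => omega
      | succ n =>
          rw [List.replicate_succ, List.cons_append, List.drop_succ_cons, ih n (by omega),
            show n + 1 - (j+1) = n - j by omega]

lemma drop_replicate_append_right (v : Str) (n j : ℕ) :
    (List.replicate n false ++ true :: v).drop (n+1+j) = v.drop j := by
  have : List.replicate n false ++ true :: v = (List.replicate n false ++ [true]) ++ v := by simp
  rw [this, show n+1+j = (List.replicate n false ++ [true]).length + j by simp,
    List.drop_length_add_append]

lemma prod_map_Q (q qm r : ℝ) : ∀ (l : Str),
    (l.map (Qmat q qm r false)).prod = (q:ℂ) ^ (l.count false) * (r:ℂ) ^ (l.count true)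
  | [] => by simp
  | x :: t => by
      rw [List.map_cons, List.prod_cons, prod_map_Q q qm r t]
      cases x
      · rw [show Qmat q qm r false false = (q:ℂ) from rfl]
        simp [List.count_cons, pow_succ]
        ring
      · rw [show Qmat q qm r false true = (r:ℂ) from rfl]
        simp [List.count_cons, pow_succ]
        ring

lemma qIntC_eq_sum (q : ℝ) (hq : (q:ℂ) ≠ 1) (n : ℕ) :
    qIntC q n = ∑ j ∈ range n, (q:ℂ) ^ j := by
  rw [geom_sum_eq hq, qIntC]
  rw [div_eq_div_iff (by intro h; apply hq; linear_combination -h) (by intro h; apply hq; linear_combination h)]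
  ring

lemma sum_pow_rev (q : ℝ) (hq : (q:ℂ) ≠ 1) (n : ℕ) :
    ∑ j ∈ range (n+1), (q:ℂ)^(n-j) = qIntC q (n+1) := by
  have h1 : ∑ j ∈ range (n+1), (q:ℂ)^(n-j) = ∑ j ∈ range (n+1), (q:ℂ)^(n+1-1-j) :=
    Finset.sum_congr rfl fun j hj => by rw [Nat.add_sub_cancel]
  rw [h1, Finset.sum_range_reflect (fun j => (q:ℂ)^j) (n+1), qIntC_eq_sum q hq (n+1)]

lemma AS_replicate (q qm r : ℝ) (hq : (q:ℂ) ≠ 1) (f : Str → ℂ) (m : ℕ) :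
    AS q qm r f (List.replicate m false)
      = qIntC q (m+1) * f (List.replicate (m+1) false) := by
  rw [AS]
  simp only [List.length_replicate]
  have : ∀ j ∈ range (m+1),
      (((List.replicate m false).drop j).map (Qmat q qm r false)).prod
        * f ((List.replicate m false).insertIdx j false)
      = (q:ℂ)^(m-j) * f (List.replicate (m+1) false) := by
    intro j hj
    have hjm : j ≤ m := by simpa [Nat.lt_succ_iff] using hj
    rw [List.drop_replicate, prod_map_Q]
    have h2 : (List.replicate m false ++ ([] : Str)).insertIdx j false
        = List.replicate (m+1) false ++ ([] : Str) := insertIdx_replicate_append [] m j hjm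
    simp only [List.append_nil] at h2
    rw [h2]
    simp [List.count_replicate]
  rw [Finset.sum_congr rfl this, ← Finset.sum_mul, sum_pow_rev q hq m]

lemma AS_step (q qm r : ℝ) (hq : (q:ℂ) ≠ 1) (f : Str → ℂ) (n : ℕ) (v : Str) :
    AS q qm r f (List.replicate n false ++ true :: v)
      = qIntC q (n+1) * (r:ℂ) * ((v.map (Qmat q qm r false)).prod)
          * f (List.replicate (n+1) false ++ true :: v)
        + AS q qm r (fun w => f (List.replicate n false ++ true :: w)) v := by
  rw [AS, AS]
  have hlen : (List.replicate n false ++ true :: v).length + 1 = (n+1) + (v.length+1) := by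
    simp; omega
  rw [hlen, Finset.sum_range_add]
  congr 1
  · -- first block
    have : ∀ j ∈ range (n+1),
        (((List.replicate n false ++ true :: v).drop j).map (Qmat q qm r false)).prod
          * f ((List.replicate n false ++ true :: v).insertIdx j false)
        = ((q:ℂ)^(n-j) * ((r:ℂ) * (v.map (Qmat q qm r false)).prod))
            * f (List.replicate (n+1) false ++ true :: v) := by
      intro j hj
      have hjn : j ≤ n := by simpa [Nat.lt_succ_iff] using hj
      rw [drop_replicate_append _ n j hjn, insertIdx_replicate_append _ n j hjn,
        List.map_append, List.prod_append, List.map_cons, List.prod_cons,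
        show Qmat q qm r false true = (r:ℂ) from rfl]
      rw [prod_map_Q]
      simp [List.count_replicate]
    rw [Finset.sum_congr rfl this, ← Finset.sum_mul, ← Finset.sum_mul, sum_pow_rev q hq n]
    ring
  · -- second block
    refine Finset.sum_congr rfl fun j hj => ?_
    rw [drop_replicate_append_right, insertIdx_replicate_append_right]

lemma AS_brane (q qm r : ℝ) (hq : (q:ℂ) ≠ 1) :
    ∀ (k : ℕ) (f : Str → ℂ) (ns : ℕ → ℕ) (m' : ℕ),
    AS q qm r f (braneString ns m' k)
      = (∑ i ∈ Icc 1 k, qIntC q (ns i + 1)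
            * (q:ℂ)^(m' + ∑ j ∈ Icc 1 (i-1), ns j) * (r:ℂ)^i
            * f (braneString (Function.update ns i (ns i + 1)) m' k))
        + qIntC q (m'+1) * f (braneString ns (m'+1) k) := by
  intro k
  induction k with
  | zero =>
      intro f ns m'
      rw [braneString, AS_replicate q qm r hq, braneString]
      simp
  | succ k ih =>
      intro f ns m'
      rw [braneString, AS_step q qm r hq]
      rw [ih (fun w => f (List.replicate (ns (k+1)) false ++ true :: w)) ns m']
      rw [Finset.sum_Icc_succ_top (Nat.le_add_left 1 k)]
      have hwt : ((braneString ns m' k).map (Qmat q qm r false)).prod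
          = (q:ℂ)^((∑ j ∈ Icc 1 k, ns j) + m') * (r:ℂ)^k := by
        rw [prod_map_Q, braneString_count_false, braneString_count_true]
      have htop : List.replicate (ns (k+1) + 1) false ++ true :: braneString ns m' k
          = braneString (Function.update ns (k+1) (ns (k+1) + 1)) m' (k+1) := by
        rw [braneString, Function.update_self,
          braneString_congr (Function.update ns (k+1) (ns (k+1)+1)) ns m' k
            (fun i hi => Function.update_of_ne
              (by rcases Finset.mem_Icc.mp hi with ⟨_, h2⟩; omega) _ _)]
      have hlow : ∀ i ∈ Icc 1 k,
          List.replicate (ns (k+1)) false ++ true :: braneString (Function.update ns i (ns i + 1)) m' k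
            = braneString (Function.update ns i (ns i + 1)) m' (k+1) := by
        intro i hi
        rw [braneString, Function.update_of_ne
          (by rcases Finset.mem_Icc.mp hi with ⟨_, h2⟩; omega) _ _]
      have hmid : List.replicate (ns (k+1)) false ++ true :: braneString ns (m'+1) k
          = braneString ns (m'+1) (k+1) := by rw [braneString]
      rw [hwt, htop, hmid]
      have hsum : ∀ i ∈ Icc 1 k,
          qIntC q (ns i + 1) * (q:ℂ)^(m' + ∑ j ∈ Icc 1 (i-1), ns j) * (r:ℂ)^i
            * f (List.replicate (ns (k+1)) false ++ true
                  :: braneString (Function.update ns i (ns i + 1)) m' k)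
          = qIntC q (ns i + 1) * (q:ℂ)^(m' + ∑ j ∈ Icc 1 (i-1), ns j) * (r:ℂ)^i
            * f (braneString (Function.update ns i (ns i + 1)) m' (k+1)) := by
        intro i hi
        rw [hlow i hi]
      rw [Finset.sum_congr rfl hsum]
      have hkk : (k+1) - 1 = k := by omega
      rw [hkk]
      ring

end DSSYK

open Finset Filter
namespace DSSYK

lemma qPochQC_succ (q : ℝ) (n : ℕ) :
    qPochQC q (n+1) = qPochQC q n * (1 - (q:ℂ)^(n+1)) := Finset.prod_range_succ _ _

lemma one_sub_q_pow_ne {q : ℝ} (hq0 : 0 < q) (hq1 : q < 1) (n : ℕ) (hn : 1 ≤ n) :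
    (1 : ℂ) - (q:ℂ)^n ≠ 0 := by
  intro h
  have h1 : ((q^n : ℝ) : ℂ) = ((1:ℝ) : ℂ) := by push_cast; linear_combination -h
  have h2 : q^n = 1 := Complex.ofReal_injective h1
  have h3 : q^n < 1 := pow_lt_one₀ (le_of_lt hq0) hq1 (by omega)
  linarith

lemma qPochQC_ne_zero {q : ℝ} (hq0 : 0 < q) (hq1 : q < 1) (n : ℕ) : qPochQC q n ≠ 0 :=
  Finset.prod_ne_zero_iff.mpr fun j _ => one_sub_q_pow_ne hq0 hq1 (j+1) (by omega)

lemma abs_one_sub_pow {q : ℝ} (hq0 : 0 < q) (hq1 : q < 1) (n : ℕ) :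
    ‖1 - (q:ℂ)^(n+1)‖ = 1 - q^(n+1) := by
  rw [show (1 : ℂ) - (q:ℂ)^(n+1) = ((1 - q^(n+1) : ℝ) : ℂ) by push_cast; ring,
    Complex.norm_real, Real.norm_eq_abs, abs_of_pos]
  have : q^(n+1) < 1 := pow_lt_one₀ (le_of_lt hq0) hq1 (by omega)
  linarith

lemma summable_abs_geom_poch {q : ℝ} (hq0 : 0 < q) (hq1 : q < 1) (z : ℂ)
    (hz : ‖z‖ < 1) :
    Summable (fun n : ℕ => ‖z^n / qPochQC q n‖) := by
  by_cases hz0 : z = 0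
  · subst hz0
    refine summable_of_ne_finset_zero (s := {0}) (fun n hn => ?_)
    have : n ≠ 0 := Finset.notMem_singleton.mp hn
    simp [zero_pow this]
  · apply summable_of_ratio_norm_eventually_le (r := (1 + ‖z‖)/2)
    · linarith
    · have h1 : Filter.Tendsto (fun n : ℕ => q ^ (n+1)) atTop (nhds 0) := by
        have := tendsto_pow_atTop_nhds_zero_of_lt_one (le_of_lt hq0) hq1
        exact this.comp (tendsto_add_atTop_nat 1)
      have h2 : ∀ᶠ n in atTop, q^(n+1) < (1 - ‖z‖)/2 :=
        h1.eventually (Filter.Tendsto.eventually_lt_const (by linarith) tendsto_id) |>.mono (fun _ h => h)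
      filter_upwards [h2] with n hn
      have hPn := qPochQC_ne_zero hq0 hq1 n
      have habs : ‖z^(n+1) / qPochQC q (n+1)‖ * (1 - q^(n+1))
          = ‖z‖ * ‖z^n / qPochQC q n‖ := by
        rw [norm_div, norm_div, norm_pow, norm_pow, qPochQC_succ, norm_mul,
          abs_one_sub_pow hq0 hq1 n]
        have h1' : (1 : ℝ) - q^(n+1) ≠ 0 := by
          have : q^(n+1) < 1 := pow_lt_one₀ (le_of_lt hq0) hq1 (by omega)
          linarith
        have h2' : ‖qPochQC q n‖ ≠ 0 := by
          simpa using hPn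
        field_simp
        ring
      have hq' : 0 < 1 - q^(n+1) := by
        have : q^(n+1) < 1 := pow_lt_one₀ (le_of_lt hq0) hq1 (by omega)
        linarith
      rw [Real.norm_eq_abs, Real.norm_eq_abs, abs_of_nonneg (norm_nonneg _),
        abs_of_nonneg (norm_nonneg _)]
      have hfn : (0:ℝ) ≤ ‖z^n / qPochQC q n‖ := norm_nonneg _
      have hfn1 : (0:ℝ) ≤ ‖z^(n+1) / qPochQC q (n+1)‖ := norm_nonneg _
      have hza : (0:ℝ) ≤ ‖z‖ := norm_nonneg _
      nlinarith [sq_nonneg (1 - ‖z‖), sq_nonneg (‖z‖)]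

lemma summable_geom_poch {q : ℝ} (hq0 : 0 < q) (hq1 : q < 1) (z : ℂ)
    (hz : ‖z‖ < 1) :
    Summable (fun n : ℕ => z^n / qPochQC q n) := by
  apply Summable.of_norm
  simpa using summable_abs_geom_poch hq0 hq1 z hz

set_option maxHeartbeats 1000000 in
lemma multipliable_poch {q : ℝ} (hq0 : 0 < q) (hq1 : q < 1) (x : ℂ)
    (hx : ‖x‖ < 1) :
    Multipliable (fun j : ℕ => 1 - x * (q:ℂ)^j) := by
  have habs : ∀ j : ℕ, ‖x * (q:ℂ)^j‖ ≤ q ^ j := by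
    intro j
    rw [norm_mul, norm_pow, Complex.norm_real, Real.norm_eq_abs, abs_of_pos hq0]
    calc ‖x‖ * q^j ≤ 1 * q^j :=
          mul_le_mul_of_nonneg_right (le_of_lt hx) (by positivity)
      _ = q ^ j := one_mul _
  have hne : ∀ j : ℕ, (1 : ℂ) - x * (q:ℂ)^j ≠ 0 := by
    intro j h
    have h1 : ‖x * (q:ℂ)^j‖ = 1 := by
      have hx1 : x * (q:ℂ)^j = 1 := by linear_combination -h
      rw [hx1, norm_one]
    have h2 : ‖x * (q:ℂ)^j‖ < 1 := by
      rw [norm_mul, norm_pow, Complex.norm_real, Real.norm_eq_abs, abs_of_pos hq0]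
      have hq' : q ^ j ≤ 1 := pow_le_one₀ (le_of_lt hq0) (le_of_lt hq1)
      nlinarith [norm_nonneg x, pow_pos hq0 j,
        mul_le_mul_of_nonneg_left hq' (norm_nonneg x)]
    linarith
  -- summable logs via tail bound
  obtain ⟨N, hN⟩ := exists_pow_lt_of_lt_one (show (0:ℝ) < 1/2 by norm_num) hq1
  have hlog : Summable (fun j : ℕ => Complex.log (1 - x * (q:ℂ)^j)) := by
    rw [← summable_nat_add_iff N]
    apply Summable.of_norm
    have hgeo : Summable (fun j : ℕ => (3/2 : ℝ) * (q^N * q^j)) :=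
      ((summable_geometric_of_lt_one (le_of_lt hq0) hq1).mul_left _).mul_left _
    apply Summable.of_nonneg_of_le (fun j => norm_nonneg _) (fun j => ?_) hgeo
    have hzj : ‖-(x * (q:ℂ)^(j+N))‖ ≤ q^(j+N) := by
      rw [norm_neg]; exact habs (j+N)
    have hsmall : ‖-(x * (q:ℂ)^(j+N))‖ ≤ 1/2 := by
      refine le_trans hzj (le_trans ?_ (le_of_lt hN))
      exact pow_le_pow_of_le_one (le_of_lt hq0) (le_of_lt hq1) (by omega)
    have := Complex.norm_log_one_add_half_le_self hsmall
    rw [show (1 : ℂ) + -(x * (q:ℂ)^(j+N)) = 1 - x * (q:ℂ)^(j+N) by ring] at this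
    refine le_trans this ?_
    rw [norm_neg]
    have := habs (j+N)
    have hpow : (q:ℝ)^(j+N) = q^N * q^j := by rw [pow_add]; ring
    nlinarith [habs (j+N)]
  exact Complex.multipliable_of_summable_log hlog

lemma poch_funct {q : ℝ} (hq0 : 0 < q) (hq1 : q < 1) (x : ℂ) (hx : ‖x‖ < 1) :
    qPochInfC q x = (1 - x) * qPochInfC q ((q:ℂ) * x) := by
  have hqx : ‖(q:ℂ) * x‖ < 1 := by
    rw [norm_mul, Complex.norm_real, Real.norm_eq_abs, abs_of_pos hq0]
    calc q * ‖x‖ ≤ 1 * ‖x‖ :=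
          mul_le_mul_of_nonneg_right (le_of_lt hq1) (norm_nonneg x)
      _ = ‖x‖ := one_mul _
      _ < 1 := hx
  have hshift : (fun j : ℕ => 1 - x * (q:ℂ)^(j+1)) = (fun j : ℕ => 1 - ((q:ℂ)*x) * (q:ℂ)^j) := by
    funext j; ring
  have hm : Multipliable (fun j : ℕ => 1 - x * (q:ℂ)^(j+1)) := by
    rw [hshift]; exact multipliable_poch hq0 hq1 _ hqx
  rw [qPochInfC, tprod_eq_zero_mul' (f := fun j : ℕ => 1 - x * (q:ℂ)^j) hm, pow_zero, mul_one]
  congr 1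
  rw [qPochInfC]
  exact tprod_congr fun j => by ring

lemma poch_inv_funct {q : ℝ} (hq0 : 0 < q) (hq1 : q < 1) (x : ℂ) (hx : ‖x‖ < 1) :
    (qPochInfC q ((q:ℂ) * x))⁻¹ = (1 - x) * (qPochInfC q x)⁻¹ := by
  have hx1 : (1 : ℂ) - x ≠ 0 := by
    intro h
    have : x = 1 := by linear_combination -h
    rw [this] at hx; simp at hx
  rw [poch_funct hq0 hq1 x hx, mul_inv, ← mul_assoc, mul_inv_cancel₀ hx1, one_mul]

lemma summable_qnsub {q : ℝ} (hq0 : 0 < q) (hq1 : q < 1) (z : ℂ) (hz : ‖z‖ < 1) :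
    Summable (fun n : ℕ => z^n / qPochQC q n * ((q:ℂ)^n - 1)) := by
  apply Summable.of_norm_bounded (g := fun n => ‖z^n / qPochQC q n‖)
    (summable_abs_geom_poch hq0 hq1 z hz)
  intro n
  rw [norm_mul]
  have hqn1 : q^n ≤ 1 := pow_le_one₀ (le_of_lt hq0) (le_of_lt hq1)
  have hqn0 : 0 < q^n := pow_pos hq0 n
  have h1 : ‖(q:ℂ)^n - 1‖ ≤ 1 := by
    rw [show (q:ℂ)^n - 1 = ((q^n - 1 : ℝ) : ℂ) by push_cast; ring, Complex.norm_real, Real.norm_eq_abs,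
      abs_of_nonpos (by linarith)]
    linarith
  exact mul_le_of_le_one_right (norm_nonneg _) h1

lemma euler_step {q : ℝ} (hq0 : 0 < q) (hq1 : q < 1) (z : ℂ) (hz : ‖z‖ < 1) :
    ∑' n : ℕ, (z * (q:ℂ))^n / qPochQC q n = (1 - z) * ∑' n : ℕ, z^n / qPochQC q n := by
  have hS : Summable (fun n : ℕ => z^n / qPochQC q n) := summable_geom_poch hq0 hq1 z hz
  have hF : Summable (fun n : ℕ => z^n / qPochQC q n * ((q:ℂ)^n - 1)) :=
    summable_qnsub hq0 hq1 z hz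
  have hptw : ∀ n : ℕ, (z * (q:ℂ))^n / qPochQC q n
      = z^n / qPochQC q n * ((q:ℂ)^n - 1) + z^n / qPochQC q n := by
    intro n; rw [mul_pow]; ring
  rw [tsum_congr hptw, Summable.tsum_add hF hS]
  have hshift : ∑' n : ℕ, z^n / qPochQC q n * ((q:ℂ)^n - 1)
      = -z * ∑' n : ℕ, z^n / qPochQC q n := by
    rw [Summable.tsum_eq_zero_add hF]
    have h0 : z^0/qPochQC q 0 * ((q:ℂ)^0 - 1) = 0 := by simp
    have hrec : ∀ n : ℕ, z^(n+1)/qPochQC q (n+1) * ((q:ℂ)^(n+1) - 1)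
        = -z * (z^n / qPochQC q n) := by
      intro n
      have hP := qPochQC_ne_zero hq0 hq1 n
      have h1 := one_sub_q_pow_ne hq0 hq1 (n+1) (by omega)
      rw [qPochQC_succ]
      field_simp
      ring
    rw [h0, zero_add, tsum_congr hrec, tsum_mul_left]
  rw [hshift]
  ring

end DSSYK

open Finset
namespace DSSYK

lemma qFactC_succ (q : ℝ) (n : ℕ) :
    qFactC q (n+1) = qFactC q n * qIntC q (n+1) := Finset.prod_range_succ _ _

lemma qIntC_ne_zero {q : ℝ} (hq0 : 0 < q) (hq1 : q < 1) (n : ℕ) (hn : 1 ≤ n) :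
    qIntC q n ≠ 0 := by
  rw [qIntC]
  apply div_ne_zero (one_sub_q_pow_ne hq0 hq1 n hn)
  have := one_sub_q_pow_ne hq0 hq1 1 le_rfl
  rwa [pow_one] at this

lemma qFactC_ne_zero {q : ℝ} (hq0 : 0 < q) (hq1 : q < 1) (n : ℕ) : qFactC q n ≠ 0 :=
  Finset.prod_ne_zero_iff.mpr fun j _ => qIntC_ne_zero hq0 hq1 (j+1) (by omega)

lemma braneCoeff_congr (q r : ℝ) (β : ℕ → ℂ) (k : ℕ) (ns1 ns2 : ℕ → ℕ)
    (h : ∀ i ∈ Icc 1 k, ns1 i = ns2 i) :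
    braneCoeff q r β k ns1 = braneCoeff q r β k ns2 := by
  rw [braneCoeff, braneCoeff]
  congr 1
  · exact Finset.prod_congr rfl fun i hi => by rw [h i hi]
  · refine Finset.prod_congr rfl fun i hi => ?_
    have hsum : (∑ j ∈ Icc 1 i, ns1 j) = ∑ j ∈ Icc 1 i, ns2 j := by
      refine Finset.sum_congr rfl fun j hj => ?_
      rcases Finset.mem_Icc.mp hj with ⟨hj1, hj2⟩
      rcases Finset.mem_Icc.mp hi with ⟨hi1, hi2⟩
      exact h j (Finset.mem_Icc.mpr ⟨hj1, by omega⟩)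
    rw [hsum]

lemma braneCoeff_scale (q r : ℝ) (hq : (q:ℂ) ≠ 0) (α : ℕ → ℂ) (hα1 : α 1 ≠ 0)
    (k n : ℕ) (ns : ℕ → ℕ) :
    braneCoeff q r (fun i => (q:ℂ)^n * α i) k ns
      = ((q:ℂ)^(∑ i ∈ Icc 1 k, ns i))^n * braneCoeff q r α k ns := by
  rw [braneCoeff, braneCoeff]
  have h1 : ∏ i ∈ Icc 1 k, ((q:ℂ)^n * α i)^(ns i) / qFactC q (ns i)
      = ((q:ℂ)^(∑ i ∈ Icc 1 k, ns i))^n * ∏ i ∈ Icc 1 k, α i ^ ns i / qFactC q (ns i) := by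
    have : ∀ i ∈ Icc 1 k, ((q:ℂ)^n * α i)^(ns i) / qFactC q (ns i)
        = ((q:ℂ)^n)^(ns i) * (α i ^ ns i / qFactC q (ns i)) := by
      intro i _
      rw [mul_pow, mul_div_assoc]
    rw [Finset.prod_congr rfl this, Finset.prod_mul_distrib,
      Finset.prod_pow_eq_pow_sum, ← pow_mul, ← pow_mul, Nat.mul_comm]
  have h2 : ∀ i ∈ Icc 1 (k-1),
      (qPochInfC q ((q:ℂ)^n * α (i+1) * (r:ℂ)^i * (q:ℂ)^(∑ j ∈ Icc 1 i, ns j)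
          / ((q:ℂ)^n * α 1)))⁻¹
        = (qPochInfC q (α (i+1) * (r:ℂ)^i * (q:ℂ)^(∑ j ∈ Icc 1 i, ns j) / α 1))⁻¹ := by
    intro i _
    rw [show (q:ℂ)^n * α (i+1) * (r:ℂ)^i * (q:ℂ)^(∑ j ∈ Icc 1 i, ns j)
        = (q:ℂ)^n * (α (i+1) * (r:ℂ)^i * (q:ℂ)^(∑ j ∈ Icc 1 i, ns j)) by ring,
      mul_div_mul_left _ _ (pow_ne_zero n hq)]
  rw [h1, Finset.prod_congr rfl h2]
  ring

lemma braneCoeff_step (q r : ℝ) (hq0 : 0 < q) (hq1 : q < 1) (β : ℕ → ℂ)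
    (hβ1 : β 1 ≠ 0) (k : ℕ) (ns : ℕ → ℕ) (i : ℕ) (hi : i ∈ Icc 1 k)
    (hx : ∀ j ∈ Icc 1 (k-1),
      ‖β (j+1) * (r:ℂ)^j * (q:ℂ)^(∑ l ∈ Icc 1 j, ns l) / β 1‖ < 1) :
    qIntC q (ns i + 1) * braneCoeff q r β k (Function.update ns i (ns i + 1))
      = β i * (∏ j ∈ Icc i (k-1),
            (1 - β (j+1) * (r:ℂ)^j * (q:ℂ)^(∑ l ∈ Icc 1 j, ns l) / β 1))
          * braneCoeff q r β k ns := by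
  obtain ⟨hi1, hik⟩ := Finset.mem_Icc.mp hi
  have hsplit' : ∏ i' ∈ Icc 1 k,
        β i' ^ (Function.update ns i (ns i + 1) i') / qFactC q (Function.update ns i (ns i+1) i')
      = (β i ^ (ns i + 1) / qFactC q (ns i + 1))
          * ∏ i' ∈ (Icc 1 k).erase i, β i' ^ ns i' / qFactC q (ns i') := by
    rw [← Finset.mul_prod_erase _ _ hi, Function.update_self]
    congr 1
    refine Finset.prod_congr rfl fun j hj => ?_
    rw [Function.update_of_ne (Finset.ne_of_mem_erase hj)]
  have hsplit : ∏ i' ∈ Icc 1 k, β i' ^ ns i' / qFactC q (ns i')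
      = (β i ^ ns i / qFactC q (ns i))
          * ∏ i' ∈ (Icc 1 k).erase i, β i' ^ ns i' / qFactC q (ns i') :=
    (Finset.mul_prod_erase _ _ hi).symm
  have hfac : qIntC q (ns i + 1) * (β i ^ (ns i + 1) / qFactC q (ns i + 1))
      = β i * (β i ^ ns i / qFactC q (ns i)) := by
    rw [qFactC_succ, pow_succ]
    have h1 : qFactC q (ns i) ≠ 0 := qFactC_ne_zero hq0 hq1 _
    have h2 : qIntC q (ns i + 1) ≠ 0 := qIntC_ne_zero hq0 hq1 _ (by omega)
    field_simp
  have hSj : ∀ j : ℕ, (∑ l ∈ Icc 1 j, Function.update ns i (ns i + 1) l)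
      = (∑ l ∈ Icc 1 j, ns l) + (if i ≤ j then 1 else 0) := by
    intro j
    by_cases hij : i ≤ j
    · rw [if_pos hij]
      have him : i ∈ Icc 1 j := Finset.mem_Icc.mpr ⟨hi1, hij⟩
      rw [Finset.sum_update_of_mem him]
      have := (Finset.add_sum_erase _ ns him).symm
      rw [Finset.sdiff_singleton_eq_erase]
      omega
    · rw [if_neg hij, add_zero]
      refine Finset.sum_congr rfl fun l hl => Function.update_of_ne ?_ _ _
      rcases Finset.mem_Icc.mp hl with ⟨_, h2⟩
      omega
  have hP2 : ∀ j ∈ Icc 1 (k-1),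
      (qPochInfC q (β (j+1) * (r:ℂ)^j
          * (q:ℂ)^(∑ l ∈ Icc 1 j, Function.update ns i (ns i + 1) l) / β 1))⁻¹
        = (if i ≤ j then (1 - β (j+1) * (r:ℂ)^j * (q:ℂ)^(∑ l ∈ Icc 1 j, ns l) / β 1) else 1)
            * (qPochInfC q (β (j+1) * (r:ℂ)^j * (q:ℂ)^(∑ l ∈ Icc 1 j, ns l) / β 1))⁻¹ := by
    intro j hj
    by_cases hij : i ≤ j
    · rw [hSj j, if_pos hij, if_pos hij]
      have harg : β (j+1) * (r:ℂ)^j * (q:ℂ)^((∑ l ∈ Icc 1 j, ns l) + 1) / β 1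
          = (q:ℂ) * (β (j+1) * (r:ℂ)^j * (q:ℂ)^(∑ l ∈ Icc 1 j, ns l) / β 1) := by
        rw [pow_succ]; ring
      rw [harg, poch_inv_funct hq0 hq1 _ (hx j hj)]
    · rw [hSj j, if_neg hij, if_neg hij, add_zero, one_mul]
  have hfilter : (Icc 1 (k-1)).filter (fun j => i ≤ j) = Icc i (k-1) := by
    ext j
    simp only [Finset.mem_filter, Finset.mem_Icc]
    omega
  rw [braneCoeff, braneCoeff, hsplit', hsplit, Finset.prod_congr rfl hP2,
    Finset.prod_mul_distrib]
  have hprodif : ∏ j ∈ Icc 1 (k-1),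
      (if i ≤ j then (1 - β (j+1) * (r:ℂ)^j * (q:ℂ)^(∑ l ∈ Icc 1 j, ns l) / β 1) else 1)
      = ∏ j ∈ Icc i (k-1), (1 - β (j+1) * (r:ℂ)^j * (q:ℂ)^(∑ l ∈ Icc 1 j, ns l) / β 1) := by
    rw [← hfilter, Finset.prod_filter]
  rw [hprodif]
  linear_combination ((∏ i' ∈ (Icc 1 k).erase i, β i' ^ ns i' / qFactC q (ns i')) *
    (∏ j ∈ Icc i (k-1), (1 - β (j+1) * (r:ℂ)^j * (q:ℂ)^(∑ l ∈ Icc 1 j, ns l) / β 1)) *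
    (∏ j ∈ Icc 1 (k-1),
      (qPochInfC q (β (j+1) * (r:ℂ)^j * (q:ℂ)^(∑ l ∈ Icc 1 j, ns l) / β 1))⁻¹)) * hfac

lemma telescope (x : ℕ → ℂ) (hx0 : x 0 = 1) :
    ∀ k, 1 ≤ k → ∑ i ∈ Icc 1 k, x (i-1) * ∏ j ∈ Icc i (k-1), (1 - x j) = 1 := by
  intro k
  induction k with
  | zero => omega
  | succ k ih =>
      intro _
      rcases Nat.eq_zero_or_pos k with rfl | hk
      · simp [hx0]
      · rw [Finset.sum_Icc_succ_top (by omega)]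
        have h1 : ∀ i ∈ Icc 1 k, x (i-1) * ∏ j ∈ Icc i (k+1-1), (1 - x j)
            = (x (i-1) * ∏ j ∈ Icc i (k-1), (1 - x j)) * (1 - x k) := by
          intro i hi
          rcases Finset.mem_Icc.mp hi with ⟨hia, hib⟩
          have hk1 : k + 1 - 1 = (k-1) + 1 := by omega
          rw [hk1, Finset.prod_Icc_succ_top (by omega), show k-1+1 = k by omega, mul_assoc]
        rw [Finset.sum_congr rfl h1, ← Finset.sum_mul, ih hk]
        have h2 : Icc (k+1) (k+1-1) = (∅ : Finset ℕ) := Finset.Icc_eq_empty (by omega)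
        rw [h2, Finset.prod_empty, mul_one, show k+1-1 = k by omega]
        ring

end DSSYK

open Finset
namespace DSSYK

lemma count_insertIdx_false : ∀ (j : ℕ) (u : Str),
    (u.insertIdx j false).count true = u.count true
  | 0, u => by rw [List.insertIdx_zero, List.count_cons]; simp
  | j+1, [] => by rw [List.insertIdx_succ_nil]
  | j+1, x :: t => by
      rw [List.insertIdx_succ_cons, List.count_cons, List.count_cons,
        count_insertIdx_false j t]

end DSSYK

open DSSYK in
/-- the EoW brane is completely screened by dressed matter chords.  With
`U_m = Σ_n ((μ·r^{k−1}/α₁)ⁿ/(q;q)_n) · V_m^{(qⁿα_k,…,qⁿα₁)}` (the series converging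
absolutely at every string), the EoW-brane Hamiltonian `H̃_{R,0} = a_{R,0} + a†_{R,0} + μW`
acts coordinatewise as `H̃_{R,0} U_m = [m]_q·U_{m−1} + α₁·r·q^m·U_m + U_{m+1}`,
i.e. as if the brane tension were `α₁·r`. -/
theorem stmt_18 (q qm r : ℝ) (hq0 : 0 < q) (hq1 : q < 1)
    (k : ℕ) (hk : 1 ≤ k) (α : ℕ → ℂ)
    (hα : ∀ i ∈ Finset.Icc 1 k, α i ≠ 0)
    (hscreen : ∀ i : ℕ, 1 ≤ i → i ≤ k - 1 →
      ‖α (i + 1)‖ * |r| ^ i < ‖α 1‖)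
    (μ : ℂ) (hμ : ‖μ‖ * |r| ^ (k - 1) < ‖α 1‖)
    (U : ℕ → Str → ℂ)
    (hU : ∀ (m : ℕ) (w : Str), U m w = ∑' n : ℕ,
      ((μ * (r : ℂ) ^ (k - 1) / α 1) ^ n / qPochQC q n)
        * braneState q r (fun i => (q : ℂ) ^ n * α i) k m w) :
    (∀ (m : ℕ) (w : Str), Summable fun n : ℕ =>
      ‖((μ * (r : ℂ) ^ (k - 1) / α 1) ^ n / qPochQC q n)
        * braneState q r (fun i => (q : ℂ) ^ n * α i) k m w‖) ∧
    (∀ (m : ℕ) (w : Str),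
      coordAct (annR (Qmat q qm r) false + creR false + μ • Wop q r) (U m) w
        = qIntC q m * U (m - 1) w
          + α 1 * (r : ℂ) * (q : ℂ) ^ m * U m w + U (m + 1) w) := by
  have hα1 : α 1 ≠ 0 := hα 1 (Finset.mem_Icc.mpr ⟨le_rfl, hk⟩)
  have hqC0 : (q:ℂ) ≠ 0 := by
    simpa using (ne_of_gt hq0)
  have hqC1 : (q:ℂ) ≠ 1 := by
    intro h
    have : q = 1 := by exact_mod_cast h
    linarith
  set y := μ * (r : ℂ) ^ (k - 1) / α 1 with hy_def
  have hy : ‖y‖ < 1 := by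
    rw [hy_def, norm_div, norm_mul, norm_pow, Complex.norm_real, Real.norm_eq_abs,
      div_lt_one (norm_pos_iff.mpr hα1)]
    exact hμ
  have hxlt : ∀ (ns : ℕ → ℕ) (j : ℕ), 1 ≤ j → j ≤ k - 1 →
      ‖α (j+1) * (r:ℂ)^j * (q:ℂ)^(∑ l ∈ Icc 1 j, ns l) / α 1‖ < 1 := by
    intro ns j hj1 hj2
    rw [norm_div, norm_mul, norm_mul, norm_pow, norm_pow, Complex.norm_real, Real.norm_eq_abs, Complex.norm_real, Real.norm_eq_abs,
      div_lt_one (norm_pos_iff.mpr hα1)]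
    have h1 : |q| ^ (∑ l ∈ Icc 1 j, ns l) ≤ 1 :=
      pow_le_one₀ (abs_nonneg q) (by rw [abs_of_pos hq0]; linarith)
    have h2 := hscreen j hj1 hj2
    have h3 : (0:ℝ) ≤ ‖α (j+1)‖ * |r|^j := by positivity
    nlinarith
  have hargcancel : ∀ (n j : ℕ) (ns : ℕ → ℕ),
      (q:ℂ)^n * α (j+1) * (r:ℂ)^j * (q:ℂ)^(∑ l ∈ Icc 1 j, ns l) / ((q:ℂ)^n * α 1)
        = α (j+1) * (r:ℂ)^j * (q:ℂ)^(∑ l ∈ Icc 1 j, ns l) / α 1 := by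
    intro n j ns
    rw [show (q:ℂ)^n * α (j+1) * (r:ℂ)^j * (q:ℂ)^(∑ l ∈ Icc 1 j, ns l)
        = (q:ℂ)^n * (α (j+1) * (r:ℂ)^j * (q:ℂ)^(∑ l ∈ Icc 1 j, ns l)) by ring,
      mul_div_mul_left _ _ (pow_ne_zero n hqC0)]
  have hval : ∀ (m : ℕ) (ns : ℕ → ℕ), U m (braneString ns m k)
      = ∑' n : ℕ, (y^n / qPochQC q n)
          * braneCoeff q r (fun i => (q:ℂ)^n * α i) k ns := by
    intro m ns
    rw [hU m (braneString ns m k)]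
    refine tsum_congr fun n => ?_
    congr 1
    rw [braneState]
    have hex : ∃ ns' : ℕ → ℕ, braneString ns m k = braneString ns' m k := ⟨ns, rfl⟩
    rw [dif_pos hex]
    exact braneCoeff_congr q r _ k _ ns
      (fun i hi => ((braneString_inj k ns hex.choose m m hex.choose_spec).2 i hi).symm)
  have hvanish : ∀ (M : ℕ) (ns : ℕ → ℕ) (a : ℕ), a ≠ M → U M (braneString ns a k) = 0 := by
    intro M ns a ha
    rw [hU]
    have hzero : ∀ n : ℕ,
        braneState q r (fun i => (q:ℂ)^n * α i) k M (braneString ns a k) = 0 := by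
      intro n
      rw [braneState, dif_neg]
      rintro ⟨ns', hns'⟩
      exact ha (braneString_inj k ns ns' a M hns').1
    exact (tsum_congr (fun n => by rw [hzero n, mul_zero])).trans tsum_zero
  have hnotbrane : ∀ (M : ℕ) (w : Str), w.count true ≠ k → U M w = 0 := by
    intro M w hw
    rw [hU]
    have hzero : ∀ n : ℕ,
        braneState q r (fun i => (q:ℂ)^n * α i) k M w = 0 := by
      intro n
      rw [braneState, dif_neg]
      rintro ⟨ns', rfl⟩
      exact hw (braneString_count_true ns' M k)
    exact (tsum_congr (fun n => by rw [hzero n, mul_zero])).trans tsum_zero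
  have hyt : ∀ ns : ℕ → ℕ, ‖y * (q:ℂ)^(∑ i ∈ Icc 1 k, ns i)‖ < 1 := by
    intro ns
    rw [norm_mul, norm_pow, Complex.norm_real, Real.norm_eq_abs, abs_of_pos hq0]
    have h1 : q ^ (∑ i ∈ Icc 1 k, ns i) ≤ 1 :=
      pow_le_one₀ (le_of_lt hq0) (le_of_lt hq1)
    have h2 : (0:ℝ) ≤ ‖y‖ := norm_nonneg _
    nlinarith
  constructor
  · -- summability
    intro m w
    by_cases h : ∃ ns : ℕ → ℕ, w = braneString ns m k
    · obtain ⟨ns, rfl⟩ := h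
      have hterm : ∀ n : ℕ,
          ‖(y^n / qPochQC q n)
            * braneState q r (fun i => (q:ℂ)^n * α i) k m (braneString ns m k)‖
          = ‖(y * (q:ℂ)^(∑ i ∈ Icc 1 k, ns i))^n / qPochQC q n‖
              * ‖braneCoeff q r α k ns‖ := by
        intro n
        have hbs : braneState q r (fun i => (q:ℂ)^n * α i) k m (braneString ns m k)
            = braneCoeff q r (fun i => (q:ℂ)^n * α i) k ns := by
          rw [braneState]
          have hex : ∃ ns' : ℕ → ℕ, braneString ns m k = braneString ns' m k := ⟨ns, rfl⟩
          rw [dif_pos hex]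
          exact braneCoeff_congr q r _ k _ ns
            (fun i hi => ((braneString_inj k ns hex.choose m m hex.choose_spec).2 i hi).symm)
        rw [hbs, braneCoeff_scale q r hqC0 α hα1 k n ns, ← norm_mul]
        congr 1
        rw [mul_pow]
        ring
      refine Summable.congr ?_ (fun n => (hterm n).symm)
      exact (summable_abs_geom_poch hq0 hq1 _ (hyt ns)).mul_right _
    · have hterm : ∀ n : ℕ,
          ‖(y^n / qPochQC q n)
            * braneState q r (fun i => (q:ℂ)^n * α i) k m w‖ = 0 := by
        intro n
        rw [braneState, dif_neg h, mul_zero, norm_zero]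
      exact (summable_zero).congr (fun n => (hterm n).symm)
  · -- the identity
    intro m u
    rw [coordAct_H q qm r μ (U m) u]
    by_cases hcnt : u.count true = k
    · obtain ⟨ns, m', rfl⟩ := exists_decomp k u hcnt
      rw [AS_brane q qm r hqC1 k (U m) ns m']
      rw [braneString_count_false, braneString_count_true]
      have hcre : (if (braneString ns m' k).getLast? = some false
            then U m (braneString ns m' k).dropLast else 0)
          = (if m' = 0 then 0 else U m (braneString ns (m'-1) k)) := by
        cases m' with
        | zero =>
            rw [braneString_getLast_zero ns k hk, if_neg (by simp), if_pos rfl]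
        | succ m'' =>
            rw [if_pos (braneString_getLast_succ ns m'' k), braneString_dropLast,
              if_neg (by omega), Nat.add_sub_cancel]
      rw [hcre]
      by_cases h1 : m' = m
      · -- MAIN CASE
        subst h1
        -- vanishing pieces
        rw [hvanish m' ns (m'+1) (by omega)]
        have hcre0 : (if m' = 0 then 0 else U m' (braneString ns (m'-1) k)) = 0 := by
          cases m' with
          | zero => rw [if_pos rfl]
          | succ mm => rw [if_neg (by omega), Nat.add_sub_cancel,
              hvanish (mm+1) ns mm (by omega)]
        rw [hcre0]
        have hR1 : qIntC q m' * U (m' - 1) (braneString ns m' k) = 0 := by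
          cases m' with
          | zero => rw [qIntC]; simp
          | succ mm => rw [Nat.add_sub_cancel, hvanish mm ns (mm+1) (by omega), mul_zero]
        rw [hR1, hvanish (m'+1) ns m' (by omega)]
        -- series computation
        have hV : U m' (braneString ns m' k)
            = (∑' n : ℕ, (y * (q:ℂ)^(∑ i ∈ Icc 1 k, ns i))^n / qPochQC q n)
                * braneCoeff q r α k ns := by
          rw [hval m' ns, ← (tsum_mul_right :
            ∑' n : ℕ, ((y * (q:ℂ)^(∑ i ∈ Icc 1 k, ns i))^n / qPochQC q n)
              * braneCoeff q r α k ns = _)]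
          refine tsum_congr fun n => ?_
          rw [braneCoeff_scale q r hqC0 α hα1 k n ns, mul_pow]
          ring
        have hUupd : ∀ i ∈ Icc 1 k,
            qIntC q (ns i + 1) * U m' (braneString (Function.update ns i (ns i + 1)) m' k)
            = α i * (∏ j ∈ Icc i (k-1),
                  (1 - α (j+1) * (r:ℂ)^j * (q:ℂ)^(∑ l ∈ Icc 1 j, ns l) / α 1))
                * braneCoeff q r α k ns
                * ∑' n : ℕ, ((y * (q:ℂ)^(∑ i ∈ Icc 1 k, ns i)) * (q:ℂ))^n / qPochQC q n := by
          intro i hi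
          rw [hval m' (Function.update ns i (ns i + 1)), ← tsum_mul_left, ← tsum_mul_left]
          refine tsum_congr fun n => ?_
          have hβ1n : (q:ℂ)^n * α 1 ≠ 0 := mul_ne_zero (pow_ne_zero n hqC0) hα1
          have hxβ : ∀ j ∈ Icc 1 (k-1),
              ‖(q:ℂ)^n * α (j+1) * (r:ℂ)^j
                * (q:ℂ)^(∑ l ∈ Icc 1 j, ns l) / ((q:ℂ)^n * α 1)‖ < 1 := by
            intro j hj
            rcases Finset.mem_Icc.mp hj with ⟨hj1, hj2⟩
            rw [hargcancel n j ns]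
            exact hxlt ns j hj1 hj2
          have hE := braneCoeff_step q r hq0 hq1 (fun i' => (q:ℂ)^n * α i') hβ1n k ns i hi hxβ
          have hprod : (∏ j ∈ Icc i (k-1),
              (1 - (q:ℂ)^n * α (j+1) * (r:ℂ)^j
                * (q:ℂ)^(∑ l ∈ Icc 1 j, ns l) / ((q:ℂ)^n * α 1)))
              = ∏ j ∈ Icc i (k-1),
                (1 - α (j+1) * (r:ℂ)^j * (q:ℂ)^(∑ l ∈ Icc 1 j, ns l) / α 1) :=
            Finset.prod_congr rfl fun j _ => by rw [hargcancel n j ns]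
          rw [hprod] at hE
          calc qIntC q (ns i + 1) * ((y^n / qPochQC q n)
                * braneCoeff q r (fun i' => (q:ℂ)^n * α i') k (Function.update ns i (ns i + 1)))
              = (y^n / qPochQC q n) * (qIntC q (ns i + 1)
                * braneCoeff q r (fun i' => (q:ℂ)^n * α i') k (Function.update ns i (ns i + 1))) := by
                ring
            _ = (y^n / qPochQC q n) * ((q:ℂ)^n * α i
                * (∏ j ∈ Icc i (k-1),
                    (1 - α (j+1) * (r:ℂ)^j * (q:ℂ)^(∑ l ∈ Icc 1 j, ns l) / α 1))
                * braneCoeff q r (fun i' => (q:ℂ)^n * α i') k ns) := by rw [hE]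
            _ = _ := by
                rw [braneCoeff_scale q r hqC0 α hα1 k n ns, mul_pow, mul_pow]
                ring
        have hASsum : (∑ i ∈ Icc 1 k, qIntC q (ns i + 1)
              * (q:ℂ)^(m' + ∑ j ∈ Icc 1 (i-1), ns j) * (r:ℂ)^i
              * U m' (braneString (Function.update ns i (ns i + 1)) m' k))
            = (q:ℂ)^m' * (α 1 * (r:ℂ)) * braneCoeff q r α k ns
                * ∑' n : ℕ, ((y * (q:ℂ)^(∑ i ∈ Icc 1 k, ns i)) * (q:ℂ))^n / qPochQC q n := by
          set x : ℕ → ℂ := fun j => α (j+1) * (r:ℂ)^j * (q:ℂ)^(∑ l ∈ Icc 1 j, ns l) / α 1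
            with hx_def
          have hx0 : x 0 = 1 := by
            rw [hx_def]
            simp [div_self hα1]
          have hterm : ∀ i ∈ Icc 1 k, qIntC q (ns i + 1)
                * (q:ℂ)^(m' + ∑ j ∈ Icc 1 (i-1), ns j) * (r:ℂ)^i
                * U m' (braneString (Function.update ns i (ns i + 1)) m' k)
              = ((q:ℂ)^m' * (α 1 * (r:ℂ)) * braneCoeff q r α k ns
                  * ∑' n : ℕ, ((y * (q:ℂ)^(∑ i ∈ Icc 1 k, ns i)) * (q:ℂ))^n / qPochQC q n)
                * (x (i-1) * ∏ j ∈ Icc i (k-1), (1 - x j)) := by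
            intro i hi
            rcases Finset.mem_Icc.mp hi with ⟨hi1, hi2⟩
            have hmain : qIntC q (ns i + 1)
                * (q:ℂ)^(m' + ∑ j ∈ Icc 1 (i-1), ns j) * (r:ℂ)^i
                * U m' (braneString (Function.update ns i (ns i + 1)) m' k)
              = (q:ℂ)^(m' + ∑ j ∈ Icc 1 (i-1), ns j) * (r:ℂ)^i
                * (qIntC q (ns i + 1)
                  * U m' (braneString (Function.update ns i (ns i + 1)) m' k)) := by ring
            rw [hmain, hUupd i hi]
            have hxi : x (i-1) = α i * (r:ℂ)^(i-1) * (q:ℂ)^(∑ l ∈ Icc 1 (i-1), ns l) / α 1 := by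
              rw [hx_def]
              simp only []
              rw [show i - 1 + 1 = i by omega]
            have hri : (r:ℂ)^i = (r:ℂ)^(i-1) * (r:ℂ) := by
              rw [← pow_succ, show i - 1 + 1 = i by omega]
            have hqm : (q:ℂ)^(m' + ∑ j ∈ Icc 1 (i-1), ns j)
                = (q:ℂ)^m' * (q:ℂ)^(∑ j ∈ Icc 1 (i-1), ns j) := pow_add _ _ _
            rw [hxi, hri, hqm]
            have hprodx : (∏ j ∈ Icc i (k-1),
                (1 - α (j+1) * (r:ℂ)^j * (q:ℂ)^(∑ l ∈ Icc 1 j, ns l) / α 1))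
                = ∏ j ∈ Icc i (k-1), (1 - x j) :=
              Finset.prod_congr rfl fun j _ => by rw [hx_def]
            rw [hprodx]
            field_simp
          rw [Finset.sum_congr rfl hterm, ← Finset.mul_sum, telescope x hx0 k hk, mul_one]
        rw [hASsum, hV]
        rw [euler_step hq0 hq1 _ (hyt ns)]
        have hαy : α 1 * y = μ * (r:ℂ)^(k-1) := by
          rw [hy_def]
          field_simp
        have hrk : (r:ℂ)^(k-1) * (r:ℂ) = (r:ℂ)^k := by
          rw [← pow_succ, show k - 1 + 1 = k by omega]
        have hqsm : (q:ℂ)^((∑ i ∈ Icc 1 k, ns i) + m')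
            = (q:ℂ)^(∑ i ∈ Icc 1 k, ns i) * (q:ℂ)^m' := pow_add _ _ _
        rw [hqsm]
        rw [← hrk]
        rw [hy_def] at *
        field_simp
        ring
      · by_cases h2 : m' = m + 1
        · -- m' = m + 1 : creation case
          subst h2
          have hz1 : ∀ i ∈ Icc 1 k,
              qIntC q (ns i + 1) * (q:ℂ)^((m+1) + ∑ j ∈ Icc 1 (i-1), ns j) * (r:ℂ)^i
                * U m (braneString (Function.update ns i (ns i + 1)) (m+1) k) = 0 := by
            intro i hi
            rw [hvanish m _ (m+1) (by omega), mul_zero]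
          rw [Finset.sum_eq_zero hz1, hvanish m ns (m+1+1) (by omega),
            hvanish m ns (m+1) (by omega)]
          rw [if_neg (by omega : ¬ m + 1 = 0), show m + 1 - 1 = m by omega]
          have hR1 : U (m - 1) (braneString ns (m+1) k) = 0 :=
            hvanish (m-1) ns (m+1) (by omega)
          have hR3 : U (m + 1) (braneString ns (m+1) k) = U m (braneString ns m k) := by
            rw [hval (m+1) ns, hval m ns]
          rw [hR1, hR3]
          ring
        · by_cases h3 : m' + 1 = m
          · -- m = m' + 1 : annihilation case
            subst h3
            have hz1 : ∀ i ∈ Icc 1 k,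
                qIntC q (ns i + 1) * (q:ℂ)^(m' + ∑ j ∈ Icc 1 (i-1), ns j) * (r:ℂ)^i
                  * U (m'+1) (braneString (Function.update ns i (ns i + 1)) m' k) = 0 := by
              intro i hi
              rw [hvanish (m'+1) _ m' (by omega), mul_zero]
            rw [Finset.sum_eq_zero hz1, hvanish (m'+1) ns m' (by omega)]
            have hcre0 : (if m' = 0 then 0 else U (m'+1) (braneString ns (m'-1) k)) = 0 := by
              cases m' with
              | zero => rw [if_pos rfl]
              | succ mm => rw [if_neg (by omega), Nat.add_sub_cancel,
                  hvanish (mm+1+1) ns mm (by omega)]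
            rw [hcre0, show m' + 1 - 1 = m' by omega]
            have hR2 : U (m'+1) (braneString ns (m'+1) k) = U m' (braneString ns m' k) := by
              rw [hval (m'+1) ns, hval m' ns]
            rw [hR2, hvanish (m'+1+1) ns m' (by omega)]
            ring
          · -- far case : everything vanishes
            have hz1 : ∀ i ∈ Icc 1 k,
                qIntC q (ns i + 1) * (q:ℂ)^(m' + ∑ j ∈ Icc 1 (i-1), ns j) * (r:ℂ)^i
                  * U m (braneString (Function.update ns i (ns i + 1)) m' k) = 0 := by
              intro i hi
              rw [hvanish m _ m' h1, mul_zero]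
            rw [Finset.sum_eq_zero hz1, hvanish m ns (m'+1) (by omega),
              hvanish m ns m' h1]
            have hcre0 : (if m' = 0 then 0 else U m (braneString ns (m'-1) k)) = 0 := by
              cases m' with
              | zero => rw [if_pos rfl]
              | succ mm =>
                  rw [if_neg (by omega), Nat.add_sub_cancel, hvanish m ns mm (by omega)]
            rw [hcre0, hvanish (m-1) ns m' (by omega), hvanish (m+1) ns m' (by omega)]
            ring
    · -- not a brane string : everything vanishes
      have hAS : AS q qm r (U m) u = 0 := by
        rw [AS]
        refine Finset.sum_eq_zero fun j hj => ?_
        rw [hnotbrane m _ (by rw [count_insertIdx_false]; exact hcnt), mul_zero]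
      have hcre : (if u.getLast? = some false then U m u.dropLast else 0) = 0 := by
        by_cases hl : u.getLast? = some false
        · rw [if_pos hl, hnotbrane m _ ?_]
          have hud := eq_dropLast_concat hl
          intro hcd
          apply hcnt
          rw [hud, List.count_append]
          simpa using hcd
        · rw [if_neg hl]
      rw [hAS, hcre, hnotbrane m u hcnt, hnotbrane (m-1) u hcnt, hnotbrane (m+1) u hcnt]
      ring
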